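/- arXiv:2201.01379 — 2 statements merged into one kernel-verified Lean document; each statement's English description precedes it below -/
import Mathlib

section
/- Let G = (V,E) be a finite simple graph and let A be a symmetric real matrix indexed by V with A_{ij} = 1 for every non-edge {i,j} (including the diagonal). Let c be the minimal entry of A and λ_max its maximal eigenvalue. If I ⊆ V spans at most ε|I|²/2 edges of G and (1−c)ε < 1, then |I| ≤ λ_max / (1 − (1−c)ε). -/
open Matrix Finset

lemma rayleigh_aux {V : Type*} [Fintype V] [DecidableEq V] (A : Matrix V V ℝ)
    (hA : A.IsHermitian) (x : V → ℝ) :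
    x ⬝ᵥ (A *ᵥ x) ≤ (⨆ i, hA.eigenvalues i) * (x ⬝ᵥ x) := by
  set U : Matrix V V ℝ := (hA.eigenvectorUnitary : Matrix V V ℝ)
  set y : V → ℝ := star U *ᵥ x with hy
  have hUU : U * star U = 1 := Matrix.mem_unitaryGroup_iff.mp hA.eigenvectorUnitary.2
  have h1 : x ⬝ᵥ (A *ᵥ x) = ∑ i, hA.eigenvalues i * (y i)^2 := by
    nth_rewrite 1 [hA.spectral_theorem]
    rw [Unitary.conjStarAlgAut_apply]
    rw [← Matrix.mulVec_mulVec, ← Matrix.mulVec_mulVec, Matrix.dotProduct_mulVec]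
    have hxU : x ᵥ* U = y := by
      rw [hy]
      ext i
      simp [Matrix.vecMul, Matrix.mulVec, dotProduct, mul_comm, Matrix.conjTranspose_apply]
    rw [hxU]
    simp only [dotProduct, Matrix.mulVec_diagonal, Function.comp_apply,
      RCLike.ofReal_real_eq_id, id_eq]
    exact Finset.sum_congr rfl fun i _ => by ring
  have h2 : x ⬝ᵥ x = ∑ i, (y i)^2 := by
    have : y ⬝ᵥ y = ((star U *ᵥ x) ᵥ* star U) ⬝ᵥ x := by
      rw [hy, Matrix.dotProduct_mulVec]
    have h3 : ((star U *ᵥ x) ᵥ* star U) = x := by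
      have hsU : star U = Uᵀ := by
        ext i j; simp [Matrix.conjTranspose_apply]
      rw [hsU, Matrix.mulVec_transpose, Matrix.vecMul_vecMul]
      have hUUt : U * Uᵀ = 1 := by rw [← hsU]; exact hUU
      rw [hUUt, Matrix.vecMul_one]
    have h4 : y ⬝ᵥ y = x ⬝ᵥ x := by rw [this, h3]
    rw [← h4]
    simp [dotProduct, sq]
  rw [h1, h2, Finset.mul_sum]
  apply Finset.sum_le_sum
  intro i _
  apply mul_le_mul_of_nonneg_right _ (sq_nonneg _)
  exact le_ciSup (Set.Finite.bddAbove (Set.finite_range _)) i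

/-- Supersaturation version of the Lovász bound: if `I` spans at most `ε|I|²/2` edges
(equivalently, at most `ε|I|²` ordered adjacent pairs) and `(1-c)ε < 1`, where `c` is the
minimal entry of `A`, then `|I| ≤ λ_max / (1 - (1-c)ε)`. -/
theorem stmt_1 {V : Type*} [Fintype V] [DecidableEq V] [Nonempty V]
    (G : SimpleGraph V) [DecidableRel G.Adj] (A : Matrix V V ℝ) (hA : A.IsHermitian)
    (h1 : ∀ i j : V, ¬ G.Adj i j → A i j = 1)
    (c : ℝ) (hc : IsLeast (Set.range fun p : V × V => A p.1 p.2) c)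
    (ε : ℝ) (hε : 0 ≤ ε) (hcε : (1 - c) * ε < 1)
    (I : Finset V)
    (hI : ((((I ×ˢ I).filter fun p => G.Adj p.1 p.2).card : ℝ)) ≤ ε * (I.card : ℝ) ^ 2) :
    (I.card : ℝ) ≤ (⨆ i, hA.eigenvalues i) / (1 - (1 - c) * ε) := by
  set lam : ℝ := ⨆ i, hA.eigenvalues i with hlam
  set n : ℝ := (I.card : ℝ) with hn
  have hn0 : 0 ≤ n := Nat.cast_nonneg _
  have hd : (0:ℝ) < 1 - (1 - c) * ε := by linarith
  -- c ≤ 1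
  have hc1 : c ≤ 1 := by
    obtain ⟨v⟩ := (inferInstance : Nonempty V)
    have h2 : c ≤ A v v := hc.2 ⟨(v, v), rfl⟩
    rwa [h1 v v (G.irrefl)] at h2
  -- lam ≥ 0 via trace
  have htr : A.trace = ∑ i, hA.eigenvalues i := by
    nth_rewrite 1 [hA.spectral_theorem]
    rw [Unitary.conjStarAlgAut_apply]
    rw [Matrix.trace_mul_comm, ← Matrix.mul_assoc]
    simp [Matrix.trace_diagonal, Matrix.mem_unitaryGroup_iff'.mp (hA.eigenvectorUnitary).2]
  have htrpos : (0:ℝ) < ∑ i, hA.eigenvalues i := by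
    rw [← htr, Matrix.trace]
    have : ∀ i : V, A.diag i = 1 := fun i => h1 i i (G.irrefl)
    simp only [this, Finset.sum_const, nsmul_eq_mul, mul_one]
    exact_mod_cast Fintype.card_pos
  have hlam0 : 0 ≤ lam := by
    by_contra h
    push_neg at h
    have : ∀ i : V, hA.eigenvalues i < 0 := fun i =>
      lt_of_le_of_lt (le_ciSup (Set.Finite.bddAbove (Set.finite_range _)) i) h
    have : ∑ i, hA.eigenvalues i ≤ 0 :=
      Finset.sum_nonpos fun i _ => (this i).le
    linarith
  -- indicator vector
  set x : V → ℝ := fun v => if v ∈ I then 1 else 0 with hx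
  have hxx : x ⬝ᵥ x = n := by
    simp [hx, dotProduct, ite_and, Finset.sum_ite_mem, hn]
  have hxAx : x ⬝ᵥ (A *ᵥ x) = ∑ p ∈ I ×ˢ I, A p.1 p.2 := by
    rw [Finset.sum_product]
    simp only [hx, dotProduct, Matrix.mulVec, dotProduct, mul_ite, mul_one,
      mul_zero, ite_mul, one_mul, zero_mul]
    rw [Finset.sum_ite_mem, Finset.univ_inter]
    apply Finset.sum_congr rfl
    intro i _
    rw [Finset.sum_ite_mem, Finset.univ_inter]
  -- counts
  set m : ℝ := (((I ×ˢ I).filter (fun p => G.Adj p.1 p.2)).card : ℝ) with hmdef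
  have hsplit : ((I ×ˢ I).filter (fun p => G.Adj p.1 p.2)).card
      + ((I ×ˢ I).filter (fun p => ¬ G.Adj p.1 p.2)).card = I.card * I.card := by
    rw [Finset.card_filter_add_card_filter_not, Finset.card_product]
  -- lower bound on sum
  have hlow : n^2 - (1 - c) * m ≤ ∑ p ∈ I ×ˢ I, A p.1 p.2 := by
    rw [← Finset.sum_filter_add_sum_filter_not (I ×ˢ I) (fun p => G.Adj p.1 p.2)]
    have hA1 : ∑ p ∈ (I ×ˢ I).filter (fun p => ¬ G.Adj p.1 p.2), A p.1 p.2
        = n * n - m := by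
      have e1 : ∑ p ∈ (I ×ˢ I).filter (fun p => ¬ G.Adj p.1 p.2), A p.1 p.2
          = ∑ p ∈ (I ×ˢ I).filter (fun p => ¬ G.Adj p.1 p.2), (1:ℝ) := by
        apply Finset.sum_congr rfl
        intro q hq
        exact h1 q.1 q.2 (Finset.mem_filter.mp hq).2
      rw [e1, Finset.sum_const, nsmul_eq_mul, mul_one]
      have : (((I ×ˢ I).filter (fun p => ¬ G.Adj p.1 p.2)).card : ℝ)
          = n * n - m := by
        have := congrArg (fun k : ℕ => (k : ℝ)) hsplit
        push_cast at this
        simp only [hn, m]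
        linarith
      exact this
    have hAc : c * m ≤ ∑ p ∈ (I ×ˢ I).filter (fun p => G.Adj p.1 p.2), A p.1 p.2 := by
      calc c * m = ∑ _p ∈ (I ×ˢ I).filter (fun p => G.Adj p.1 p.2), c := by
            rw [Finset.sum_const, nsmul_eq_mul]; ring
        _ ≤ _ := Finset.sum_le_sum fun p _ => hc.2 ⟨p, rfl⟩
    rw [hA1]
    nlinarith [hAc]
  have hray := rayleigh_aux A hA x
  rw [hxAx, hxx] at hray
  have hm0 : (0:ℝ) ≤ m := Nat.cast_nonneg _
  have hkey : n^2 * (1 - (1 - c) * ε) ≤ lam * n := by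
    have h5 : (1 - c) * m ≤ (1 - c) * (ε * n^2) :=
      mul_le_mul_of_nonneg_left hI (by linarith)
    nlinarith [hlow, hray]
  rw [le_div_iff₀ hd]
  rcases eq_or_lt_of_le hn0 with h | h
  · rw [← h]; ring_nf; positivity
  · nlinarith [hkey]
end

section
/- Let k be a prime, let t ∈ ℤ/kℤ with t ≠ 0, and let F be a set of vectors in (ℤ/kℤ)^n such that the number of ordered pairs (f₁, f₂) ∈ F × F with (f₁, f₂) ≠ t is at most ε|F|², where ε < (k−1)/k. Then |F| ≤ C(t,k) · k^{n/2} / (1 − (k/(k−1))·ε), where C(t,k) = (1/(k−1)) · Σ_{a=1}^{k−1} max( |cos(2π t a / k)| , |sin(2π t a / k)| ) (here t a is computed with t viewed as an integer representative). -/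
open Finset Complex ZMod


lemma addChar_sum' {A M : Type*} [AddCommMonoid A] [CommMonoid M] (ψ : AddChar A M)
    {ι : Type*} (s : Finset ι) (f : ι → A) : ψ (∑ i ∈ s, f i) = ∏ i ∈ s, ψ (f i) := by
  classical
  induction s using Finset.induction with
  | empty => simp
  | insert a s ha ih =>
                    simp [Finset.sum_insert ha, Finset.prod_insert ha,
                      AddChar.map_add_eq_mul, ih]

lemma orth1 {k : ℕ} [NeZero k] (c : ZMod k) :
    ∑ x : ZMod k, stdAddChar (c * x) = if c = 0 then (k : ℂ) else 0 := by
  split_ifs with h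
  · simp [h, ZMod.card]
  · exact AddChar.sum_eq_zero_of_ne_one (isPrimitive_stdAddChar k h)

lemma orthvec {k n : ℕ} [NeZero k] (h : Fin n → ZMod k) :
    ∑ g : Fin n → ZMod k, stdAddChar (∑ r, h r * g r)
      = if h = 0 then ((k : ℂ)) ^ n else 0 := by
  classical
  have e : ∀ g : Fin n → ZMod k, stdAddChar (∑ r, h r * g r) = ∏ r, stdAddChar (h r * g r) :=
    fun g => addChar_sum' _ _ _
  simp_rw [e]
  rw [← Fintype.piFinset_univ,
    ← Finset.prod_univ_sum (fun _ => Finset.univ) (fun r x => stdAddChar (h r * x))]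
  simp_rw [orth1]
  split_ifs with h0
  · simp [h0]
  · obtain ⟨r, hr⟩ : ∃ r, h r ≠ 0 := by
      by_contra hc; push_neg at hc; exact h0 (funext hc)
    exact Finset.prod_eq_zero (Finset.mem_univ r) (by simp [hr])

lemma stdAddChar_conj {k : ℕ} [NeZero k] (x : ZMod k) :
    (starRingEnd ℂ) (stdAddChar x) = stdAddChar (-x) := by
  rw [stdAddChar_apply, stdAddChar_apply, AddChar.map_neg_eq_inv, Circle.coe_inv_eq_conj]

section core
variable {k n : ℕ} [NeZero k] (a : ZMod k) (F : Finset (Fin n → ZMod k))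

private noncomputable def Sfun (g : Fin n → ZMod k) : ℂ :=
  ∑ f ∈ F, stdAddChar (a * ∑ r, g r * f r)

lemma Sfun_conj (g : Fin n → ZMod k) :
    (starRingEnd ℂ) (Sfun a F g) = ∑ f ∈ F, stdAddChar (-(a * ∑ r, g r * f r)) := by
  rw [Sfun, map_sum]; simp_rw [stdAddChar_conj]

lemma sumB (ha : ∀ x : ZMod k, a * x = 0 → x = 0) :
    ∑ g : Fin n → ZMod k, Sfun a F g * (starRingEnd ℂ) (Sfun a F g)
      = (k : ℂ) ^ n * F.card := by
  classical
  have step : ∀ g : Fin n → ZMod k, Sfun a F g * (starRingEnd ℂ) (Sfun a F g)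
      = ∑ f1 ∈ F, ∑ f2 ∈ F, stdAddChar (∑ r, (a * f1 r - a * f2 r) * g r) := by
    intro g
    rw [Sfun_conj, Sfun, Finset.sum_mul_sum]
    refine Finset.sum_congr rfl fun f1 _ => Finset.sum_congr rfl fun f2 _ => ?_
    rw [← AddChar.map_add_eq_mul]
    congr 1
    rw [← sub_eq_add_neg, Finset.mul_sum, Finset.mul_sum, ← Finset.sum_sub_distrib]
    exact Finset.sum_congr rfl fun r _ => by ring
  simp_rw [step]
  rw [Finset.sum_comm]
  have inner : ∀ f1 ∈ F, ∑ g : Fin n → ZMod k, ∑ f2 ∈ F,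
      stdAddChar (∑ r, (a * f1 r - a * f2 r) * g r)
      = (k : ℂ) ^ n := by
    intro f1 hf1
    rw [Finset.sum_comm]
    have : ∀ f2 : Fin n → ZMod k, ∑ g : Fin n → ZMod k,
        stdAddChar (∑ r, (a * f1 r - a * f2 r) * g r)
        = if f2 = f1 then ((k:ℂ))^n else 0 := by
      intro f2
      rw [orthvec (fun r => a * f1 r - a * f2 r)]
      congr 1
      simp only [eq_iff_iff]
      constructor
      · intro h
        funext r
        have := congrFun h r
        simp only [Pi.zero_apply] at this
        have := ha _ (by rw [mul_sub]; simpa using this)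
        exact (sub_eq_zero.mp this).symm
      · intro h; subst h; funext r; simp
    simp_rw [this]
    rw [Finset.sum_ite_eq' F f1 (fun _ => ((k:ℂ))^n)]
    simp [hf1]
  rw [Finset.sum_congr rfl inner, Finset.sum_const, nsmul_eq_mul, mul_comm]

lemma sumC (ha : ∀ x : ZMod k, a * x = 0 → x = 0) :
    ∃ M : ℕ, M ≤ F.card ∧
      ∑ g : Fin n → ZMod k, Sfun a F g * Sfun a F g = (k : ℂ) ^ n * M := by
  classical
  refine ⟨(F.filter fun f => -f ∈ F).card, Finset.card_filter_le _ _, ?_⟩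
  have step : ∀ g : Fin n → ZMod k, Sfun a F g * Sfun a F g
      = ∑ f1 ∈ F, ∑ f2 ∈ F, stdAddChar (∑ r, (a * f1 r + a * f2 r) * g r) := by
    intro g
    rw [Sfun, Finset.sum_mul_sum]
    refine Finset.sum_congr rfl fun f1 _ => Finset.sum_congr rfl fun f2 _ => ?_
    rw [← AddChar.map_add_eq_mul]
    congr 1
    rw [Finset.mul_sum, Finset.mul_sum, ← Finset.sum_add_distrib]
    exact Finset.sum_congr rfl fun r _ => by ring
  simp_rw [step]
  rw [Finset.sum_comm]
  have inner : ∀ f1 ∈ F, ∑ g : Fin n → ZMod k, ∑ f2 ∈ F,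
      stdAddChar (∑ r, (a * f1 r + a * f2 r) * g r)
      = if -f1 ∈ F then ((k:ℂ)) ^ n else 0 := by
    intro f1 hf1
    rw [Finset.sum_comm]
    have : ∀ f2 : Fin n → ZMod k, ∑ g : Fin n → ZMod k,
        stdAddChar (∑ r, (a * f1 r + a * f2 r) * g r)
        = if f2 = -f1 then ((k:ℂ))^n else 0 := by
      intro f2
      rw [orthvec (fun r => a * f1 r + a * f2 r)]
      congr 1
      simp only [eq_iff_iff]
      constructor
      · intro h
        funext r
        have := congrFun h r
        simp only [Pi.zero_apply] at this
        have := ha _ (by rw [mul_add]; simpa using this)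
        simp only [Pi.neg_apply]
        linear_combination this
      · intro h; subst h; funext r; simp
    simp_rw [this]
    rw [Finset.sum_ite_eq' F (-f1) (fun _ => ((k:ℂ))^n)]
  rw [Finset.sum_congr rfl inner, ← Finset.sum_filter, Finset.sum_const, nsmul_eq_mul, mul_comm]

end core

lemma maxsq (θ : ℝ) :
    (max |Real.cos θ| |Real.sin θ|)^2 * 2 = 1 + |Real.cos θ^2 - Real.sin θ^2| := by
  have pyth := Real.sin_sq_add_cos_sq θ
  have h1 : |Real.cos θ|^2 = Real.cos θ^2 := _root_.sq_abs _
  have h2 : |Real.sin θ|^2 = Real.sin θ^2 := _root_.sq_abs _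
  rcases le_total |Real.cos θ| |Real.sin θ| with h | h
  · have h3 : Real.cos θ^2 ≤ Real.sin θ^2 := by
      rw [← h1, ← h2]; exact pow_le_pow_left₀ (abs_nonneg _) h 2
    rw [max_eq_right h, _root_.sq_abs, _root_.abs_of_nonpos (sub_nonpos.mpr h3)]
    linarith
  · have h3 : Real.sin θ^2 ≤ Real.cos θ^2 := by
      rw [← h1, ← h2]; exact pow_le_pow_left₀ (abs_nonneg _) h 2
    rw [max_eq_left h, _root_.sq_abs, _root_.abs_of_nonneg (sub_nonneg.mpr h3)]
    linarith

lemma keybound {k n : ℕ} [NeZero k] (a : ZMod k) (ha : ∀ x : ZMod k, a * x = 0 → x = 0)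
    (F : Finset (Fin n → ZMod k)) (θ : ℝ) :
    |∑ g ∈ F, (Complex.exp (-(θ:ℂ) * Complex.I) * Sfun a F g).re|
      ≤ (F.card : ℝ) * (k:ℝ) ^ ((n:ℝ)/2) * max |Real.cos θ| |Real.sin θ| := by
  classical
  set w : ℂ := Complex.exp (-(θ:ℂ) * Complex.I) with hw
  obtain ⟨M, hM, hX⟩ := sumC a F ha
  have hB := sumB a F ha
  have hconjw : (starRingEnd ℂ) w = Complex.exp ((θ:ℂ) * Complex.I) := by
    rw [hw, ← Complex.exp_conj]; congr 1; simp
  have hww : w * (starRingEnd ℂ) w = 1 := by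
    rw [hconjw, hw, ← Complex.exp_add]
    norm_num
  have hw2 : w^2 = Complex.exp ((↑(-(2*θ)) : ℂ) * Complex.I) := by
    rw [hw, sq, ← Complex.exp_add]
    congr 1
    push_cast
    ring
  have mulre : ∀ (x c : ℝ), (Complex.exp ((x:ℂ)*Complex.I) * (c:ℂ)).re = Real.cos x * c := by
    intro x c
    simp [Complex.mul_re, Complex.exp_ofReal_mul_I_re]
  have key : ∑ g : Fin n → ZMod k, ((w * Sfun a F g).re)^2
      = (Real.cos (2*θ) * ((k:ℝ)^n * M) + (k:ℝ)^n * F.card)/2 := by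
    have sq_re : ∀ z : ℂ, (z.re)^2 = ((z^2).re + (z * (starRingEnd ℂ) z).re)/2 := by
      intro z
      simp only [Complex.mul_re, Complex.conj_re, Complex.conj_im, sq]
      ring
    simp_rw [sq_re]
    rw [← Finset.sum_div, Finset.sum_add_distrib, ← Complex.re_sum, ← Complex.re_sum]
    have e1 : ∑ g : Fin n → ZMod k, (w * Sfun a F g)^2 = w^2 * ((k:ℂ)^n * M) := by
      rw [← hX, Finset.mul_sum]
      exact Finset.sum_congr rfl fun g _ => by ring
    have e2 : ∑ g : Fin n → ZMod k, (w * Sfun a F g) * (starRingEnd ℂ) (w * Sfun a F g)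
        = (k:ℂ)^n * F.card := by
      rw [← hB]
      refine Finset.sum_congr rfl fun g _ => ?_
      rw [map_mul]
      calc w * Sfun a F g * ((starRingEnd ℂ) w * (starRingEnd ℂ) (Sfun a F g))
          = (w * (starRingEnd ℂ) w) * (Sfun a F g * (starRingEnd ℂ) (Sfun a F g)) := by ring
        _ = Sfun a F g * (starRingEnd ℂ) (Sfun a F g) := by rw [hww, one_mul]
    rw [e1, e2, hw2]
    have c1 : (k:ℂ)^n * (M:ℂ) = (((k:ℝ)^n * M : ℝ) : ℂ) := by push_cast; ring
    have c2 : (k:ℂ)^n * (F.card:ℂ) = (((k:ℝ)^n * F.card : ℝ) : ℂ) := by push_cast; ring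
    rw [c1, c2, mulre, Complex.ofReal_re, Real.cos_neg]
  have bound : ∑ g : Fin n → ZMod k, ((w * Sfun a F g).re)^2
      ≤ (k:ℝ)^n * F.card * (max |Real.cos θ| |Real.sin θ|)^2 := by
    rw [key]
    have hm := maxsq θ
    have hc2 : Real.cos (2*θ) = Real.cos θ^2 - Real.sin θ^2 := Real.cos_two_mul' _
    have hkn : (0:ℝ) ≤ (k:ℝ)^n := by positivity
    have hMN : (M:ℝ) ≤ F.card := Nat.cast_le.mpr hM
    have h1 : Real.cos (2*θ) * (M:ℝ) ≤ |Real.cos (2*θ)| * (M:ℝ) :=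
      mul_le_mul_of_nonneg_right (le_abs_self _) (Nat.cast_nonneg _)
    have h2 : |Real.cos (2*θ)| * (M:ℝ) ≤ |Real.cos (2*θ)| * F.card :=
      mul_le_mul_of_nonneg_left hMN (abs_nonneg _)
    rw [hc2] at h1 h2 ⊢
    have h3 := mul_le_mul_of_nonneg_left (h1.trans h2) hkn
    have h4 : (k:ℝ)^n * F.card * (max |Real.cos θ| |Real.sin θ|)^2
        = (|Real.cos θ^2 - Real.sin θ^2| * ((k:ℝ)^n * F.card) + (k:ℝ)^n * F.card)/2 := by
      linear_combination ((k:ℝ)^n * (F.card:ℝ) / 2) * hm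
    nlinarith [h3, h4]
  have cs : (∑ g ∈ F, (w * Sfun a F g).re)^2
      ≤ (F.card:ℝ) * ∑ g ∈ F, ((w * Sfun a F g).re)^2 := by
    have h := Finset.sum_mul_sq_le_sq_mul_sq F (fun g => (w * Sfun a F g).re) (fun _ => (1:ℝ))
    simp only [mul_one, one_pow, Finset.sum_const, nsmul_eq_mul] at h
    linarith [h]
  have mono : ∑ g ∈ F, ((w * Sfun a F g).re)^2
      ≤ ∑ g : Fin n → ZMod k, ((w * Sfun a F g).re)^2 :=
    Finset.sum_le_sum_of_subset_of_nonneg (Finset.subset_univ F) (fun _ _ _ => sq_nonneg _)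
  have hk2 : ((k:ℝ)^((n:ℝ)/2))^2 = (k:ℝ)^n := by
    rw [← Real.rpow_natCast ((k:ℝ)^((n:ℝ)/2)) 2, ← Real.rpow_mul (Nat.cast_nonneg k)]
    push_cast
    rw [div_mul_cancel₀ _ (two_ne_zero), Real.rpow_natCast]
  have final_sq : (∑ g ∈ F, (w * Sfun a F g).re)^2
      ≤ ((F.card:ℝ) * (k:ℝ)^((n:ℝ)/2) * max |Real.cos θ| |Real.sin θ|)^2 := by
    have hNn : (0:ℝ) ≤ (F.card:ℝ) := Nat.cast_nonneg _
    calc (∑ g ∈ F, (w * Sfun a F g).re)^2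
        ≤ (F.card:ℝ) * ∑ g : Fin n → ZMod k, ((w * Sfun a F g).re)^2 := by
          refine le_trans cs (mul_le_mul_of_nonneg_left mono hNn)
      _ ≤ (F.card:ℝ) * ((k:ℝ)^n * F.card * (max |Real.cos θ| |Real.sin θ|)^2) :=
          mul_le_mul_of_nonneg_left bound hNn
      _ = ((F.card:ℝ) * (k:ℝ)^((n:ℝ)/2) * max |Real.cos θ| |Real.sin θ|)^2 := by
          rw [mul_pow, mul_pow, hk2]; ring
  have rhs_nonneg : 0 ≤ (F.card:ℝ) * (k:ℝ)^((n:ℝ)/2) * max |Real.cos θ| |Real.sin θ| := by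
    have : (0:ℝ) ≤ max |Real.cos θ| |Real.sin θ| := le_trans (abs_nonneg _) (le_max_left _ _)
    positivity
  calc |∑ g ∈ F, (w * Sfun a F g).re|
      = Real.sqrt ((∑ g ∈ F, (w * Sfun a F g).re)^2) := (Real.sqrt_sq_eq_abs _).symm
    _ ≤ Real.sqrt (((F.card:ℝ) * (k:ℝ)^((n:ℝ)/2) * max |Real.cos θ| |Real.sin θ|)^2) :=
        Real.sqrt_le_sqrt final_sq
    _ = (F.card:ℝ) * (k:ℝ)^((n:ℝ)/2) * max |Real.cos θ| |Real.sin θ| := by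
        rw [Real.sqrt_sq rhs_nonneg]
lemma orthIcc {k : ℕ} [NeZero k] (c : ZMod k) :
    ∑ a ∈ Finset.Icc 1 (k-1), stdAddChar ((a : ZMod k) * c)
      = (if c = 0 then (k:ℂ) else 0) - 1 := by
  classical
  have hk1 : 1 ≤ k := Nat.one_le_iff_ne_zero.mpr (NeZero.ne k)
  have key : ∑ a ∈ Finset.Icc 1 (k-1), stdAddChar ((a : ZMod k) * c)
      = ∑ x ∈ (Finset.univ.erase (0 : ZMod k)), stdAddChar (x * c) := by
    refine Finset.sum_nbij' (i := fun a => (a : ZMod k)) (j := fun x => x.val)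
      ?_ ?_ ?_ ?_ ?_
    · intro a haa
      simp only [Finset.mem_Icc] at haa
      refine Finset.mem_erase.mpr ⟨?_, Finset.mem_univ _⟩
      rw [Ne, ZMod.natCast_eq_zero_iff]
      exact Nat.not_dvd_of_pos_of_lt (by omega) (by omega)
    · intro x hx
      have hx0 : x ≠ 0 := (Finset.mem_erase.mp hx).1
      have h1 : x.val ≠ 0 := fun h => hx0 ((ZMod.val_eq_zero x).mp h)
      have h2 : x.val < k := ZMod.val_lt x
      simp only [Finset.mem_Icc]
      omega
    · intro a haa
      simp only [Finset.mem_Icc] at haa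
      exact ZMod.val_cast_of_lt (by omega)
    · intro x _
      exact ZMod.natCast_zmod_val x
    · intro a _; rfl
  rw [key, Finset.sum_erase_eq_sub (Finset.mem_univ _), zero_mul, AddChar.map_zero_eq_one]
  have e : ∑ x : ZMod k, stdAddChar (x * c) = ∑ x : ZMod k, stdAddChar (c * x) := by
    simp_rw [mul_comm]
  rw [e, orth1]

/-- For prime `k` and `t ≠ 0`: if at most `ε|F|²` ordered pairs of vectors of `F` have
scalar product different from `t` and `ε < (k-1)/k`, then
`|F| ≤ C(t,k) · k^(n/2) / (1 - (k/(k-1))·ε)`, where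
`C(t,k) = (1/(k-1)) · ∑_{a=1}^{k-1} max(|cos(2π t a / k)|, |sin(2π t a / k)|)`. -/
theorem stmt_13 {k n : ℕ} (hk : Nat.Prime k) (t : ZMod k) (ht : t ≠ 0)
    (F : Finset (Fin n → ZMod k)) (ε : ℝ) (hε : 0 ≤ ε)
    (hεk : ε < ((k : ℝ) - 1) / k)
    (hF : (((F ×ˢ F).filter fun p => ∑ r, p.1 r * p.2 r ≠ t).card : ℝ)
      ≤ ε * (F.card : ℝ) ^ 2) :
    (F.card : ℝ) ≤
      ((1 / ((k : ℝ) - 1)) * ∑ a ∈ Finset.Icc 1 (k - 1),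
          max |Real.cos (2 * Real.pi * ((t.val * a : ℕ) : ℝ) / k)|
              |Real.sin (2 * Real.pi * ((t.val * a : ℕ) : ℝ) / k)|)
        * (k : ℝ) ^ ((n : ℝ) / 2) / (1 - ((k : ℝ) / ((k : ℝ) - 1)) * ε) := by
  classical
  haveI : Fact (Nat.Prime k) := ⟨hk⟩
  haveI : NeZero k := ⟨hk.ne_zero⟩
  have hk2 : (2:ℝ) ≤ (k:ℝ) := by exact_mod_cast hk.two_le
  set N : ℝ := (F.card : ℝ) with hN
  set Sm : ℝ := ∑ a ∈ Finset.Icc 1 (k - 1),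
      max |Real.cos (2 * Real.pi * ((t.val * a : ℕ) : ℝ) / k)|
          |Real.sin (2 * Real.pi * ((t.val * a : ℕ) : ℝ) / k)| with hSm
  have Sm_nonneg : 0 ≤ Sm :=
    Finset.sum_nonneg fun a _ => le_trans (abs_nonneg _) (le_max_left _ _)
  set Stot : ℝ := ∑ a ∈ Finset.Icc 1 (k-1), ∑ p ∈ F ×ˢ F,
      (stdAddChar ((a : ZMod k) * ((∑ r, p.1 r * p.2 r) - t))).re with hStot
  -- lower bound
  have lower : ((k:ℝ) - 1 - k*ε) * N^2 ≤ Stot := by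
    rw [hStot, Finset.sum_comm]
    have inner : ∀ p ∈ F ×ˢ F,
        ∑ a ∈ Finset.Icc 1 (k-1), (stdAddChar ((a : ZMod k) * ((∑ r, p.1 r * p.2 r) - t))).re
        = if (∑ r, p.1 r * p.2 r) = t then (k:ℝ) - 1 else -1 := by
      intro p _
      rw [← Complex.re_sum, orthIcc]
      by_cases h : (∑ r, p.1 r * p.2 r) = t
      · rw [if_pos (sub_eq_zero.mpr h), if_pos h]
        simp
      · rw [if_neg (fun hc => h (sub_eq_zero.mp hc)), if_neg h]
        simp
    rw [Finset.sum_congr rfl inner]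
    rw [← Finset.sum_filter_add_sum_filter_not (F ×ˢ F) (fun p => (∑ r, p.1 r * p.2 r) = t)]
    rw [Finset.sum_congr rfl (fun p hp => if_pos (Finset.mem_filter.mp hp).2),
      Finset.sum_congr rfl (fun p hp => if_neg (Finset.mem_filter.mp hp).2)]
    rw [Finset.sum_const, Finset.sum_const, nsmul_eq_mul, nsmul_eq_mul]
    have hcards : ((F ×ˢ F).filter (fun p => (∑ r, p.1 r * p.2 r) = t)).card
        + ((F ×ˢ F).filter (fun p => ¬ (∑ r, p.1 r * p.2 r) = t)).card = F.card * F.card := by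
      rw [Finset.card_filter_add_card_filter_not, Finset.card_product]
    have hBcard : (((F ×ˢ F).filter (fun p => ¬ (∑ r, p.1 r * p.2 r) = t)).card : ℝ)
        ≤ ε * N^2 := hF
    have hGcard : (((F ×ˢ F).filter (fun p => (∑ r, p.1 r * p.2 r) = t)).card : ℝ)
        = N^2 - ((F ×ˢ F).filter (fun p => ¬ (∑ r, p.1 r * p.2 r) = t)).card := by
      have := congrArg (fun m : ℕ => (m:ℝ)) hcards
      push_cast at this
      rw [hN]
      push_cast
      linarith
    rw [hGcard]
    have hkpos : (0:ℝ) < k := by linarith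
    nlinarith [hBcard]
  -- upper bound
  have upper : Stot ≤ N * (k:ℝ)^((n:ℝ)/2) * Sm := by
    rw [hStot, hSm, Finset.mul_sum]
    refine Finset.sum_le_sum fun a haI => ?_
    set θ : ℝ := 2 * Real.pi * ((t.val * a : ℕ) : ℝ) / k with hθ
    have hamem := Finset.mem_Icc.mp haI
    have hane : ((a:ℕ) : ZMod k) ≠ 0 := by
      rw [Ne, ZMod.natCast_eq_zero_iff]
      have := hk.two_le
      exact Nat.not_dvd_of_pos_of_lt (by omega) (by omega)
    have ha : ∀ x : ZMod k, ((a:ℕ) : ZMod k) * x = 0 → x = 0 := by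
      intro x hx
      rcases mul_eq_zero.mp hx with h | h
      · exact absurd h hane
      · exact h
    have hwa : stdAddChar (-(((a:ℕ) : ZMod k) * t)) = Complex.exp (-(θ:ℂ) * Complex.I) := by
      have h1 : -(((a:ℕ) : ZMod k) * t) = (((-(t.val * a : ℤ)) : ℤ) : ZMod k) := by
        push_cast [ZMod.natCast_zmod_val]
        ring
      rw [h1, ZMod.stdAddChar_coe]
      congr 1
      rw [hθ]
      push_cast
      field_simp
    have expand : ∑ p ∈ F ×ˢ F, (stdAddChar ((a : ZMod k) * ((∑ r, p.1 r * p.2 r) - t))).re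
        = ∑ g ∈ F, (Complex.exp (-(θ:ℂ) * Complex.I) * Sfun ((a:ℕ) : ZMod k) F g).re := by
      rw [Finset.sum_product]
      refine Finset.sum_congr rfl fun g _ => ?_
      rw [Sfun, Finset.mul_sum, Complex.re_sum]
      refine Finset.sum_congr rfl fun f _ => ?_
      congr 1
      have h2 : ((a:ℕ) : ZMod k) * ((∑ r, g r * f r) - t)
          = (-(((a:ℕ) : ZMod k) * t)) + ((a:ℕ) : ZMod k) * ∑ r, g r * f r := by ring
      rw [h2, AddChar.map_add_eq_mul, hwa]
    rw [expand]
    calc ∑ g ∈ F, (Complex.exp (-(θ:ℂ) * Complex.I) * Sfun ((a:ℕ) : ZMod k) F g).re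
        ≤ |∑ g ∈ F, (Complex.exp (-(θ:ℂ) * Complex.I) * Sfun ((a:ℕ) : ZMod k) F g).re| :=
          le_abs_self _
      _ ≤ N * (k:ℝ)^((n:ℝ)/2) * max |Real.cos θ| |Real.sin θ| := keybound _ ha F θ
      _ = N * (k:ℝ)^((n:ℝ)/2) * max |Real.cos θ| |Real.sin θ| := rfl
  -- combine
  have hkpos : (0:ℝ) < k := by linarith
  have hdenom : (0:ℝ) < (k:ℝ) - 1 - k*ε := by
    have := (lt_div_iff₀ hkpos).mp hεk
    linarith
  have hk1pos : (0:ℝ) < (k:ℝ) - 1 := by linarith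
  have hD : 1 - ((k:ℝ)/((k:ℝ)-1))*ε = ((k:ℝ)-1-k*ε)/((k:ℝ)-1) := by
    field_simp
  rcases Nat.eq_zero_or_pos F.card with h0 | hpos
  · have : N = 0 := by rw [hN, h0]; simp
    rw [this, hD]
    apply div_nonneg
    · apply mul_nonneg
      · exact mul_nonneg (by positivity) Sm_nonneg
      · positivity
    · positivity
  · have hNpos : (0:ℝ) < N := by rw [hN]; exact_mod_cast hpos
    have hineq : ((k:ℝ)-1-k*ε) * N ≤ (k:ℝ)^((n:ℝ)/2) * Sm := by
      have h := lower.trans upper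
      have h2 : (((k:ℝ)-1-k*ε) * N) * N ≤ ((k:ℝ)^((n:ℝ)/2) * Sm) * N := by nlinarith
      exact le_of_mul_le_mul_right h2 hNpos
    rw [hD, le_div_iff₀ (by positivity : (0:ℝ) < ((k:ℝ)-1-k*ε)/((k:ℝ)-1))]
    calc N * (((k:ℝ)-1-k*ε)/((k:ℝ)-1)) = (((k:ℝ)-1-k*ε) * N)/((k:ℝ)-1) := by ring
      _ ≤ ((k:ℝ)^((n:ℝ)/2) * Sm)/((k:ℝ)-1) := by gcongr
      _ = 1/((k:ℝ)-1) * Sm * (k:ℝ)^((n:ℝ)/2) := by ring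
end
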